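/- Let x, y ∈ ℂ be distinct points with |y| ≠ 1 and xȳ ≠ 1. Then the maximum over the unit circle {a : |a| = 1} of f(a) = |x−a|/|y−a| equals (|x−y| + |xȳ−1|)/||y|²−1|, and it is attained at the point a⁺ = (|x−y|(xȳ−1)y + (x−y)|xȳ−1|)/(|x−y|(xȳ−1) + (x−y)|xȳ−1|ȳ). -/

import Mathlib

open Complex

/-- The maximizing boundary point a⁺(x,y) for |x-a|/|y-a| on the unit circle. -/
noncomputable def aplusPoint (x y : ℂ) : ℂ :=
  (((‖x - y‖ : ℝ) : ℂ) * (x * (starRingEnd ℂ) y - 1) * y +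
      (x - y) * ((‖x * (starRingEnd ℂ) y - 1‖ : ℝ) : ℂ)) /
    (((‖x - y‖ : ℝ) : ℂ) * (x * (starRingEnd ℂ) y - 1) +
      (x - y) * ((‖x * (starRingEnd ℂ) y - 1‖ : ℝ) : ℂ) * (starRingEnd ℂ) y)

/-- The maximum of |x-a|/|y-a| over the unit circle equals
(|x-y| + |x ȳ - 1|)/||y|²-1|, attained at the point a⁺(x,y). -/
theorem max_ratio_on_circle (x y : ℂ) (hxy : x ≠ y) (hy : ‖y‖ ≠ 1)
    (hxyb : x * (starRingEnd ℂ) y ≠ 1) :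
    (∀ a : ℂ, ‖a‖ = 1 →
        ‖x - a‖ / ‖y - a‖ ≤
          (‖x - y‖ + ‖x * (starRingEnd ℂ) y - 1‖) /
            |‖y‖ ^ 2 - 1|) ∧
    ‖aplusPoint x y‖ = 1 ∧
    ‖x - aplusPoint x y‖ / ‖y - aplusPoint x y‖ =
      (‖x - y‖ + ‖x * (starRingEnd ℂ) y - 1‖) /
        |‖y‖ ^ 2 - 1| := by
  set c := starRingEnd ℂ with hc
  set w : ℂ := x * c y - 1 with hw
  set r : ℝ := ‖x - y‖ with hr
  set s : ℝ := ‖w‖ with hs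
  have hr0 : 0 < r := by
    rw [hr]; exact (norm_pos_iff.mpr (sub_ne_zero.mpr hxy))
  have hs0 : 0 < s := by
    rw [hs]; exact (norm_pos_iff.mpr (sub_ne_zero.mpr hxyb))
  have hm0 : 0 < |‖y‖ ^ 2 - 1| := by
    rw [abs_pos]
    intro h
    apply hy
    have h1 : (‖y‖ - 1) * (‖y‖ + 1) = 0 := by nlinarith
    rcases mul_eq_zero.mp h1 with h2 | h2
    · linarith
    · have := norm_nonneg y; linarith
  have hyconj : y * c y = ((‖y‖ ^ 2 : ℝ) : ℂ) := by
    rw [hc, Complex.mul_conj, Complex.normSq_eq_norm_sq]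
  have habs1 : ‖y * c y - 1‖ = |‖y‖ ^ 2 - 1| := by
    have h : y * c y - 1 = ((‖y‖ ^ 2 - 1 : ℝ) : ℂ) := by
      rw [hyconj]; push_cast; ring
    rw [h, Complex.norm_real, Real.norm_eq_abs]
  -- Part 1: the bound
  have part1 : ∀ a : ℂ, ‖a‖ = 1 →
      ‖x - a‖ / ‖y - a‖ ≤ (r + s) / |‖y‖ ^ 2 - 1| := by
    intro a ha
    have hya : y - a ≠ 0 := by
      intro h
      apply hy
      rw [sub_eq_zero.mp h, ha]
    have hya0 : 0 < ‖y - a‖ := norm_pos_iff.mpr hya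
    have haa : a * c a = 1 := by
      rw [hc, Complex.mul_conj, Complex.normSq_eq_norm_sq, ha]; norm_num
    have hconjcirc : ‖c y * a - 1‖ = ‖y - a‖ := by
      have h1 : (c y * a - 1) * c a = c (y - a) := by
        rw [hc]; simp only [map_sub]
        rw [← hc]
        linear_combination c y * haa
      have h2 := congrArg (‖·‖) h1
      rw [norm_mul] at h2
      have h3 : ‖c a‖ = 1 := by rw [hc, Complex.norm_conj, ha]
      have h4 : ‖c (y - a)‖ = ‖y - a‖ := by
        rw [hc, Complex.norm_conj]
      rw [h3, h4, mul_one] at h2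
      exact h2
    have key : (y * c y - 1) * (x - a) = w * (y - a) + (x - y) * (c y * a - 1) := by
      rw [hw]; ring
    have hb : |‖y‖ ^ 2 - 1| * ‖x - a‖
        = ‖w * (y - a) + (x - y) * (c y * a - 1)‖ := by
      rw [← key, norm_mul, habs1]
    have hle : ‖w * (y - a) + (x - y) * (c y * a - 1)‖
        ≤ (r + s) * ‖y - a‖ := by
      calc ‖w * (y - a) + (x - y) * (c y * a - 1)‖
          ≤ ‖w * (y - a)‖ + ‖(x - y) * (c y * a - 1)‖ :=
            norm_add_le _ _
        _ = s * ‖y - a‖ + r * ‖y - a‖ := by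
            rw [norm_mul, norm_mul, hconjcirc, ← hs, ← hr]
        _ = (r + s) * ‖y - a‖ := by ring
    rw [div_le_div_iff₀ hya0 hm0]
    nlinarith
  -- setup for part 2
  set N : ℂ := (r : ℂ) * w * y + (x - y) * (s : ℂ) with hN
  set D : ℂ := (r : ℂ) * w + (x - y) * (s : ℂ) * c y with hD
  have haplus : aplusPoint x y = N / D := by
    rw [aplusPoint, hN, hD, ← hc, ← hw, ← hr, ← hs]
  have hDne : D ≠ 0 := by
    intro h0
    have h1 : (r : ℂ) * w = -((x - y) * (s : ℂ) * c y) := by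
      rw [hD] at h0
      linear_combination h0
    have h2 := congrArg (‖·‖) h1
    rw [norm_mul, norm_neg, norm_mul, norm_mul, Complex.norm_real, Real.norm_eq_abs, Complex.norm_real, Real.norm_eq_abs,
      hc, Complex.norm_conj, ← hs, ← hr, abs_of_pos hr0, abs_of_pos hs0] at h2
    apply hy
    have h3 : r * s * 1 = r * s * ‖y‖ := by linarith
    exact (mul_left_cancel₀ (by positivity : (r*s:ℝ) ≠ 0) h3).symm
  have habsD : 0 < ‖D‖ := norm_pos_iff.mpr hDne
  -- |N| = |D|
  have hNc : c N = (r : ℂ) * c w * c y + (c x - c y) * (s : ℂ) := by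
    rw [hN, hc]; simp [map_add, norm_mul, map_sub, Complex.conj_ofReal]
  have hDc : c D = (r : ℂ) * c w + (c x - c y) * (s : ℂ) * y := by
    rw [hD, hc]; simp [map_add, norm_mul, map_sub, Complex.conj_ofReal]
  have hww : w * c w = ((s : ℂ)) ^ 2 := by
    rw [hc, Complex.mul_conj, Complex.normSq_eq_norm_sq, ← hs]; push_cast; ring
  have hxx : (x - y) * (c x - c y) = ((r : ℂ)) ^ 2 := by
    have : (x - y) * c (x - y) = ((Complex.normSq (x - y) : ℝ) : ℂ) := Complex.mul_conj _
    rw [hc] at this ⊢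
    simp only [map_sub] at this
    rw [this, Complex.normSq_eq_norm_sq, ← hr]; push_cast; ring
  have hNND : N * c N = D * c D := by
    rw [hNc, hDc, hN, hD]
    linear_combination ((y * c y - 1) * ((r:ℂ))^2) * hww - ((y * c y - 1) * ((s:ℂ))^2) * hxx
  have habsND : ‖N‖ = ‖D‖ := by
    have h1 : ((Complex.normSq N : ℝ) : ℂ) = ((Complex.normSq D : ℝ) : ℂ) := by
      rw [← Complex.mul_conj, ← Complex.mul_conj, ← hc]; exact hNND
    have h2 : Complex.normSq N = Complex.normSq D := by exact_mod_cast h1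
    rw [Complex.norm_def, Complex.norm_def, h2]
  have part2a : ‖aplusPoint x y‖ = 1 := by
    rw [haplus, norm_div, habsND, div_self (ne_of_gt habsD)]
  -- explicit differences
  have hyA : y - aplusPoint x y = ((x - y) * (s : ℂ) * (y * c y - 1)) / D := by
    rw [haplus, eq_div_iff hDne, sub_mul, div_mul_cancel₀ _ hDne, hN, hD]; ring
  have hxA : x - aplusPoint x y = ((x - y) * w * ((r : ℂ) + (s : ℂ))) / D := by
    rw [haplus, eq_div_iff hDne, sub_mul, div_mul_cancel₀ _ hDne, hN, hD]; ring
  have habsyA : ‖y - aplusPoint x y‖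
      = r * s * |‖y‖ ^ 2 - 1| / ‖D‖ := by
    rw [hyA, norm_div, norm_mul, norm_mul, habs1, Complex.norm_real, Real.norm_eq_abs, ← hr,
      abs_of_pos hs0]
  have habsxA : ‖x - aplusPoint x y‖
      = r * s * (r + s) / ‖D‖ := by
    have h1 : ((r : ℂ) + (s : ℂ)) = ((r + s : ℝ) : ℂ) := by push_cast; ring
    rw [hxA, norm_div, norm_mul, norm_mul, h1, Complex.norm_real, Real.norm_eq_abs, ← hr, ← hs,
      abs_of_pos (by linarith : (0:ℝ) < r + s)]
  have part2b : ‖x - aplusPoint x y‖ / ‖y - aplusPoint x y‖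
      = (r + s) / |‖y‖ ^ 2 - 1| := by
    rw [habsxA, habsyA]
    field_simp
  exact ⟨part1, part2a, part2b⟩
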